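/- Assume GCH, let κ be a regular uncountable cardinal, and let s be a function defined on the ordinals below κ whose values are cardinals below κ. Then there exists a class sequence Γ = ⟨x_α : α ∈ ON⟩ (a function from ordinals to sets of ordinals) such that every x_α has cardinality less than κ, and for every cardinal γ ≥ κ and every ordinal α < κ with cf(γ) > s(α), every set x of ordinals below γ with |x| = s(α) occurs as x_β for some β < γ. -/

import Mathlib

open Cardinal Ordinal

/-- Assume GCH, let κ be a regular uncountable cardinal, and let s assign to each
ordinal below κ a cardinal below κ. Then there is a class sequence Γ of sets of
ordinals, each of cardinality < κ, such that for every cardinal γ ≥ κ and every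
α < κ with cf(γ) > s(α), every set of ordinals below γ of cardinality exactly s(α)
occurs as x_β for some β < γ. -/
theorem statement2
    (gch : ∀ c : Cardinal.{0}, ℵ₀ ≤ c → (2 : Cardinal.{0}) ^ c = Order.succ c)
    (κ : Cardinal.{0}) (hreg : κ.IsRegular) (hunc : ℵ₀ < κ)
    (s : Ordinal.{0} → Cardinal.{0}) (hs : ∀ α < κ.ord, s α < κ) :
    ∃ Γ : Ordinal.{0} → Set Ordinal.{0},
      (∀ α : Ordinal.{0}, #(Γ α) < Cardinal.lift.{1} κ) ∧
      ∀ γ : Cardinal.{0}, κ ≤ γ →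
        ∀ α : Ordinal.{0}, α < κ.ord → s α < γ.ord.cof →
          ∀ x : Set Ordinal.{0}, x ⊆ Set.Iio γ.ord →
            #x = Cardinal.lift.{1} (s α) →
            ∃ β : Ordinal.{0}, β < γ.ord ∧ Γ β = x := by
  classical
  have hκ0 : ℵ₀ ≤ κ := hunc.le
  have hℵκ : (ℵ₀ : Cardinal.{1}) ≤ Cardinal.lift.{1} κ := by
    rw [← Cardinal.lift_aleph0.{1, 0}]
    exact Cardinal.lift_le.2 hκ0
  -- the collection of candidate sets for level μ
  set V : Cardinal.{0} → Set (Set Ordinal.{0}) :=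
    fun μ => {x | #x < Cardinal.lift.{1} κ ∧ ∃ δ < μ.ord, x ⊆ Set.Iio δ} with hVdef
  -- counting: #(V μ) ≤ lift μ
  have count : ∀ μ : Cardinal.{0}, κ ≤ μ →
      (∀ δ : Ordinal.{0}, δ < μ.ord → Order.succ δ.card ≤ μ) →
      #(V μ) ≤ Cardinal.lift.{1} μ := by
    intro μ hμ hsucc
    have hμ0 : ℵ₀ ≤ μ := hκ0.trans hμ
    have hsub : V μ ⊆ ⋃ δ : (Set.Iio μ.ord), 𝒫 (Set.Iio (δ : Ordinal.{0})) := by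
      rintro x ⟨-, δ, hδ, hxδ⟩
      exact Set.mem_iUnion.2 ⟨⟨δ, hδ⟩, hxδ⟩
    have hIio : #(Set.Iio μ.ord) = Cardinal.lift.{1} μ := by
      rw [Ordinal.mk_Iio_ordinal, Cardinal.card_ord]
    have hpow : ∀ δ : (Set.Iio μ.ord), #(𝒫 (Set.Iio (δ : Ordinal.{0}))) ≤
        Cardinal.lift.{1} μ := by
      rintro ⟨δ, hδ⟩
      rw [Cardinal.mk_powerset, Ordinal.mk_Iio_ordinal, ← Cardinal.lift_two.{1,0},
        ← Cardinal.lift_power, Cardinal.lift_le]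
      by_cases hc : ℵ₀ ≤ δ.card
      · rw [gch δ.card hc]
        exact hsucc δ hδ
      · exact le_of_lt <| lt_of_lt_of_le
          (Cardinal.power_lt_aleph0 (by exact_mod_cast Cardinal.nat_lt_aleph0 2)
            (lt_of_not_ge hc)) hμ0
    calc #(V μ) ≤ #(⋃ δ : (Set.Iio μ.ord), 𝒫 (Set.Iio (δ : Ordinal.{0}))) :=
          Cardinal.mk_le_mk_of_subset hsub
      _ ≤ #(Set.Iio μ.ord) * ⨆ δ : (Set.Iio μ.ord), #(𝒫 (Set.Iio (δ : Ordinal.{0}))) :=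
          Cardinal.mk_iUnion_le _
      _ ≤ Cardinal.lift.{1} μ * Cardinal.lift.{1} μ := by
          have hne : Nonempty (Set.Iio μ.ord) := by
            refine ⟨⟨0, ?_⟩⟩
            rw [Set.mem_Iio, Cardinal.lt_ord]
            simpa using lt_of_lt_of_le Cardinal.aleph0_pos hμ0
          exact mul_le_mul' hIio.le (ciSup_le' hpow)
      _ = Cardinal.lift.{1} μ := Cardinal.mul_eq_self (by simpa using hμ0)
  -- key: surjections onto V μ from any set of ordinals of size ≥ μ
  have key : ∀ μ : Cardinal.{0}, κ ≤ μ →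
      (∀ δ : Ordinal.{0}, δ < μ.ord → Order.succ δ.card ≤ μ) →
      ∀ fib : Set Ordinal.{0}, Cardinal.lift.{1} μ ≤ #fib →
      ∃ f : Ordinal.{0} → Set Ordinal.{0},
        (∀ β, #(f β) < Cardinal.lift.{1} κ) ∧ ∀ x ∈ V μ, ∃ β ∈ fib, f β = x := by
    intro μ hμ hsucc fib hfib
    have hVf : #(V μ) ≤ #fib := (count μ hμ hsucc).trans hfib
    have hne : Nonempty (V μ) := by
      refine ⟨⟨∅, ?_, 1, ?_, by simp⟩⟩
      · simpa using lt_of_lt_of_le Cardinal.aleph0_pos hℵκ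
      · rw [Cardinal.lt_ord]
        simpa using lt_of_lt_of_le Cardinal.one_lt_aleph0 (hκ0.trans hμ)
    obtain ⟨g⟩ := Cardinal.le_def _ _ |>.1 hVf
    let h : fib → (V μ) := Function.invFun (⇑g)
    have hsurj : Function.Surjective h := Function.invFun_surjective g.injective
    refine ⟨fun β => if hb : β ∈ fib then ((h ⟨β, hb⟩ : V μ) : Set Ordinal.{0}) else ∅,
      ?_, ?_⟩
    · intro β
      by_cases hb : β ∈ fib
      · simp only [hb, dif_pos]
        exact (h ⟨β, hb⟩).2.1
      · simp only [hb, dif_neg, not_false_iff]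
        simpa using lt_of_lt_of_le Cardinal.aleph0_pos hℵκ
    · intro x hx
      obtain ⟨b, hb⟩ := hsurj ⟨x, hx⟩
      refine ⟨b.1, b.2, ?_⟩
      simp only [b.2, dif_pos]
      rw [Subtype.coe_eta, hb]
  -- level κ
  have hsuccκ : ∀ δ : Ordinal.{0}, δ < κ.ord → Order.succ δ.card ≤ κ :=
    fun δ hδ => Order.succ_le_of_lt (Cardinal.lt_ord.1 hδ)
  obtain ⟨f₀, hf₀card, hf₀cov⟩ := key κ le_rfl hsuccκ (Set.Iio κ.ord)
    (by rw [Ordinal.mk_Iio_ordinal, Cardinal.card_ord])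
  -- levels succ ν for ν ≥ κ
  have keyν : ∀ ν : Cardinal.{0}, κ ≤ ν →
      ∃ f : Ordinal.{0} → Set Ordinal.{0},
        (∀ β, #(f β) < Cardinal.lift.{1} κ) ∧
        ∀ x ∈ V (Order.succ ν), ∃ β ∈ Set.Ico ν.ord (Order.succ ν).ord, f β = x := by
    intro ν hν
    have hν0 : ℵ₀ ≤ ν := hκ0.trans hν
    have hsucc : ∀ δ : Ordinal.{0}, δ < (Order.succ ν).ord → Order.succ δ.card ≤ Order.succ ν :=
      fun δ hδ => Order.succ_le_succ ((Order.lt_succ_iff).1 (Cardinal.lt_ord.1 hδ))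
    refine key (Order.succ ν) (hν.trans (Order.le_succ ν)) hsucc _ ?_
    by_contra hlt
    push_neg at hlt
    have hcover : Set.Iio ((Order.succ ν).ord) ⊆
        Set.Iio ν.ord ∪ Set.Ico ν.ord (Order.succ ν).ord := by
      intro β hβ
      rcases lt_or_ge β ν.ord with h | h
      · exact Or.inl h
      · exact Or.inr ⟨h, hβ⟩
    have h1 : Cardinal.lift.{1} (Order.succ ν) ≤
        #(Set.Iio ν.ord) + #(Set.Ico ν.ord (Order.succ ν).ord) := by
      calc Cardinal.lift.{1} (Order.succ ν) = #(Set.Iio ((Order.succ ν).ord)) := by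
            rw [Ordinal.mk_Iio_ordinal, Cardinal.card_ord]
        _ ≤ #((Set.Iio ν.ord ∪ Set.Ico ν.ord (Order.succ ν).ord : Set Ordinal.{0})) :=
            Cardinal.mk_le_mk_of_subset hcover
        _ ≤ _ := Cardinal.mk_union_le _ _
    have h2 : #(Set.Iio ν.ord) + #(Set.Ico ν.ord (Order.succ ν).ord) <
        Cardinal.lift.{1} (Order.succ ν) := by
      apply Cardinal.add_lt_of_lt
      · simpa using (Cardinal.lift_le.2 (hν0.trans (Order.le_succ ν)))
      · rw [Ordinal.mk_Iio_ordinal, Cardinal.card_ord]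
        exact Cardinal.lift_lt.2 (Order.lt_succ ν)
      · exact hlt
    exact absurd h1 (not_le.2 h2)
  choose! fS hfScard hfScov using keyν
  -- assemble Γ
  refine ⟨fun β => if β < κ.ord then f₀ β else fS β.card β, ?_, ?_⟩
  · intro β
    by_cases hb : β < κ.ord
    · simpa [hb] using hf₀card β
    · have hκβ : κ ≤ β.card := by
        have : κ.ord ≤ β := le_of_not_gt hb
        simpa using Ordinal.card_le_card this
      simpa [hb] using hfScard β.card hκβ β
  · intro γ hγκ α hα hcof x hxsub hxcard
    have hγ0 : ℵ₀ ≤ γ := hκ0.trans hγκ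
    have hxκ : #x < Cardinal.lift.{1} κ := by
      rw [hxcard]; exact Cardinal.lift_lt.2 (hs α hα)
    -- x is bounded below γ.ord
    obtain ⟨e⟩ : Nonempty (ULift.{1} (s α).out ≃ x) := by
      rw [← Cardinal.eq, Cardinal.mk_uLift, Cardinal.mk_out, hxcard]
    set g : (s α).out → Ordinal.{0} := fun i => ((e ⟨i⟩ : x) : Ordinal.{0}) with hg
    have hsup : (⨆ i, g i) < γ.ord := by
      apply Ordinal.iSup_lt_ord
      · rw [Cardinal.mk_out]; exact hcof
      · intro i; exact hxsub (e ⟨i⟩).2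
    set δ : Ordinal.{0} := (⨆ i, g i) + 1 with hδdef
    have hδγ : δ < γ.ord := by
      have := (Cardinal.isSuccLimit_ord hγ0).succ_lt hsup
      rwa [← Ordinal.add_one_eq_succ] at this
    have hxδ : x ⊆ Set.Iio δ := by
      intro a ha
      have : a ≤ ⨆ i, g i := by
        have h1 : g ((e.symm ⟨a, ha⟩).down) = a := by
          show ((e (e.symm ⟨a, ha⟩) : x) : Ordinal.{0}) = a
          rw [Equiv.apply_symm_apply]
        calc a = g ((e.symm ⟨a, ha⟩).down) := h1.symm
          _ ≤ ⨆ i, g i := le_ciSup (Ordinal.bddAbove_range g) _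
      exact lt_of_le_of_lt this (lt_add_one _)
    by_cases hδκ : δ < κ.ord
    · -- handled by level κ
      obtain ⟨β, hβ, hfβ⟩ := hf₀cov x ⟨hxκ, δ, hδκ, hxδ⟩
      have hβκ : β < κ.ord := hβ
      exact ⟨β, lt_of_lt_of_le hβκ (Cardinal.ord_le_ord.2 hγκ), by simpa [hβκ] using hfβ⟩
    · -- handled by level succ δ.card
      have hκδ : κ ≤ δ.card := by
        have : κ.ord ≤ δ := le_of_not_gt hδκ
        simpa using Ordinal.card_le_card this
      have hδγc : δ.card < γ := Cardinal.lt_ord.1 hδγ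
      have hsuccγ : Order.succ δ.card ≤ γ := Order.succ_le_of_lt hδγc
      have hxV : x ∈ V (Order.succ δ.card) :=
        ⟨hxκ, δ, Cardinal.lt_ord.2 (Order.lt_succ _), hxδ⟩
      obtain ⟨β, hβ, hfβ⟩ := hfScov δ.card hκδ x hxV
      obtain ⟨hβ1, hβ2⟩ := hβ
      have hβcard : β.card = δ.card := by
        apply le_antisymm
        · exact (Order.lt_succ_iff).1 (Cardinal.lt_ord.1 hβ2)
        · simpa using Ordinal.card_le_card hβ1
      have hβnκ : ¬ β < κ.ord := by
        rw [not_lt]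
        exact le_trans (Cardinal.ord_le_ord.2 hκδ) hβ1
      refine ⟨β, ?_, ?_⟩
      · exact lt_of_lt_of_le hβ2 (Cardinal.ord_le_ord.2 hsuccγ)
      · simpa [hβnκ, hβcard] using hfβ
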